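/- arXiv:2003.10941 — 2 statements merged into one kernel-verified Lean document; each statement's English description precedes it below -/
import Mathlib

section
/- For the flat Markov chain in ℝ^N with steps of radii d₁,…,d_M starting at 0, the variance of ‖x_M‖² equals (4/N)·∑_{i<j} d_i² d_j², i.e., E[‖x_M‖⁴] − (∑_i d_i²)² = (4/N)∑_{i<j} d_i²d_j². -/
open MeasureTheory Real
open scoped RealInnerProductSpace

/-- `(Ld ν d f) x₀` is the average of `f` over the sphere of radius `d` centered at `x₀`,
where `ν` is the uniform (rotation-invariant) probability measure on the unit sphere. -/
noncomputable def Ld {N : ℕ} (ν : MeasureTheory.Measure (EuclideanSpace ℝ (Fin N)))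
    (d : ℝ) (f : EuclideanSpace ℝ (Fin N) → ℝ) (x₀ : EuclideanSpace ℝ (Fin N)) : ℝ :=
  ∫ y, f (x₀ + d • y) ∂ν

/-- Iterated averaging: `(iterLd ν [d₁, …, d_M] f) x₀` is the expectation of `f (x_M)` for
the flat Markov chain with step radii `d₁, …, d_M` starting at `x₀`. -/
noncomputable def iterLd {N : ℕ} (ν : MeasureTheory.Measure (EuclideanSpace ℝ (Fin N))) :
    List ℝ → (EuclideanSpace ℝ (Fin N) → ℝ) → EuclideanSpace ℝ (Fin N) → ℝ
  | [], f => f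
  | d :: rest, f => Ld ν d (iterLd ν rest f)


section Aux
variable {N : ℕ} (ν : Measure (EuclideanSpace ℝ (Fin N))) [IsProbabilityMeasure ν]

lemma integrable_of_ae_bound {f : EuclideanSpace ℝ (Fin N) → ℝ} (hf : Continuous f)
    {C : ℝ} (h : ∀ᵐ y ∂ν, ‖f y‖ ≤ C) : Integrable f ν :=
  ⟨hf.aestronglyMeasurable, HasFiniteIntegral.of_bounded h⟩

lemma map_int
    (hinv : ∀ O : EuclideanSpace ℝ (Fin N) ≃ₗᵢ[ℝ] EuclideanSpace ℝ (Fin N), ν.map O = ν)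
    (O : EuclideanSpace ℝ (Fin N) ≃ₗᵢ[ℝ] EuclideanSpace ℝ (Fin N))
    {f : EuclideanSpace ℝ (Fin N) → ℝ} (hf : Continuous f) :
    ∫ y, f (O y) ∂ν = ∫ y, f y ∂ν := by
  conv_rhs => rw [← hinv O]
  exact (integral_map O.continuous.aemeasurable hf.aestronglyMeasurable).symm

lemma moment1
    (hinv : ∀ O : EuclideanSpace ℝ (Fin N) ≃ₗᵢ[ℝ] EuclideanSpace ℝ (Fin N), ν.map O = ν)
    (x : EuclideanSpace ℝ (Fin N)) : ∫ y, ⟪x, y⟫ ∂ν = 0 := by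
  have h := map_int ν hinv (LinearIsometryEquiv.neg ℝ)
    (f := fun y => ⟪x, y⟫) (continuous_const.inner continuous_id)
  simp only [LinearIsometryEquiv.coe_neg] at h
  simp only [inner_neg_right] at h
  rw [integral_neg] at h
  linarith

lemma unit_eq
    (hinv : ∀ O : EuclideanSpace ℝ (Fin N) ≃ₗᵢ[ℝ] EuclideanSpace ℝ (Fin N), ν.map O = ν)
    (u v : EuclideanSpace ℝ (Fin N)) (huv : ‖u‖ = ‖v‖) :
    ∫ y, ⟪u, y⟫ ^ 2 ∂ν = ∫ y, ⟪v, y⟫ ^ 2 ∂ν := by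
  set O := Submodule.reflection (ℝ ∙ (u - v))ᗮ with hO
  have h := map_int ν hinv O (f := fun y => ⟪v, y⟫ ^ 2)
    ((continuous_const.inner continuous_id).pow 2)
  have hOv : O u = v := Submodule.reflection_sub huv
  have key : ∀ y, ⟪v, O y⟫ = ⟪u, y⟫ := by
    intro y
    calc ⟪v, O y⟫ = ⟪O u, O y⟫ := by rw [hOv]
    _ = ⟪u, y⟫ := O.inner_map_map u y
  simp only [key] at h
  exact h

lemma moment2 (hN : 1 ≤ N)
    (hsupp : ∀ᵐ y ∂ν, ‖y‖ = 1)
    (hinv : ∀ O : EuclideanSpace ℝ (Fin N) ≃ₗᵢ[ℝ] EuclideanSpace ℝ (Fin N), ν.map O = ν)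
    (x : EuclideanSpace ℝ (Fin N)) : ∫ y, ⟪x, y⟫ ^ 2 ∂ν = ‖x‖ ^ 2 / N := by
  have hN0 : (N : ℝ) ≠ 0 := Nat.cast_ne_zero.mpr (by omega)
  set i0 : Fin N := ⟨0, hN⟩
  set e : Fin N → EuclideanSpace ℝ (Fin N) := fun i => EuclideanSpace.single i 1 with he
  have hne : ∀ i, ‖e i‖ = 1 := by
    intro i; simp [he, EuclideanSpace.norm_single]
  have hint : ∀ i : Fin N, Integrable (fun y => ⟪e i, y⟫ ^ 2) ν := by
    intro i
    refine integrable_of_ae_bound ν ((continuous_const.inner continuous_id).pow 2)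
      (C := 1) (hsupp.mono fun y hy => ?_)
    have h1 : |⟪e i, y⟫| ≤ 1 := by
      calc |⟪e i, y⟫| ≤ ‖e i‖ * ‖y‖ := abs_real_inner_le_norm _ _
      _ = 1 := by simp [hne i, hy]
    rw [Real.norm_eq_abs, abs_pow]
    calc |⟪e i, y⟫| ^ 2 ≤ 1 ^ 2 := by gcongr
    _ = 1 := one_pow 2
  have hsum : ∫ y, (∑ i, ⟪e i, y⟫ ^ 2) ∂ν = 1 := by
    have : ∀ᵐ y ∂ν, (∑ i, ⟪e i, y⟫ ^ 2) = (1 : ℝ) := by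
      refine hsupp.mono fun y hy => ?_
      have : ∀ i, ⟪e i, y⟫ = y i := by
        intro i; simp [he, EuclideanSpace.inner_single_left]
      simp only [this]
      have h2 : ‖y‖ ^ 2 = ∑ i, y i ^ 2 := by
        exact EuclideanSpace.real_norm_sq_eq y
      rw [← h2, hy, one_pow]
    rw [integral_congr_ae this]
    simp
  rw [integral_finset_sum _ (fun i _ => hint i)] at hsum
  have heq : ∀ i : Fin N, ∫ y, ⟪e i, y⟫ ^ 2 ∂ν = ∫ y, ⟪e i0, y⟫ ^ 2 ∂ν := fun i =>
    unit_eq ν hinv (e i) (e i0) (by rw [hne, hne])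
  rw [Finset.sum_congr rfl (fun i _ => heq i), Finset.sum_const, Finset.card_univ,
    Fintype.card_fin, nsmul_eq_mul] at hsum
  have hbase : ∫ y, ⟪e i0, y⟫ ^ 2 ∂ν = 1 / N := by
    field_simp at hsum ⊢
    linarith [hsum]
  have hx : ∫ y, ⟪x, y⟫ ^ 2 ∂ν = ∫ y, ⟪‖x‖ • e i0, y⟫ ^ 2 ∂ν :=
    unit_eq ν hinv x (‖x‖ • e i0) (by rw [norm_smul, hne]; simp [abs_of_nonneg (norm_nonneg x)])
  rw [hx]
  have : ∀ y, ⟪‖x‖ • e i0, y⟫ ^ 2 = ‖x‖ ^ 2 * ⟪e i0, y⟫ ^ 2 := by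
    intro y; rw [real_inner_smul_left]; ring
  simp only [this]
  rw [integral_const_mul, hbase]
  ring

lemma inner_integrable (hsupp : ∀ᵐ y ∂ν, ‖y‖ = 1) (x : EuclideanSpace ℝ (Fin N)) :
    Integrable (fun y => ⟪x, y⟫) ν := by
  refine integrable_of_ae_bound ν (continuous_const.inner continuous_id)
    (C := ‖x‖) (hsupp.mono fun y hy => ?_)
  rw [Real.norm_eq_abs]
  calc |⟪x, y⟫| ≤ ‖x‖ * ‖y‖ := abs_real_inner_le_norm _ _
  _ = ‖x‖ := by rw [hy, mul_one]

lemma inner_sq_integrable (hsupp : ∀ᵐ y ∂ν, ‖y‖ = 1) (x : EuclideanSpace ℝ (Fin N)) :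
    Integrable (fun y => ⟪x, y⟫ ^ 2) ν := by
  refine integrable_of_ae_bound ν ((continuous_const.inner continuous_id).pow 2)
    (C := ‖x‖ ^ 2) (hsupp.mono fun y hy => ?_)
  rw [Real.norm_eq_abs, abs_pow]
  have h1 : |⟪x, y⟫| ≤ ‖x‖ := by
    calc |⟪x, y⟫| ≤ ‖x‖ * ‖y‖ := abs_real_inner_le_norm _ _
    _ = ‖x‖ := by rw [hy, mul_one]
  gcongr

lemma Ld_poly (hN : 1 ≤ N)
    (hsupp : ∀ᵐ y ∂ν, ‖y‖ = 1)
    (hinv : ∀ O : EuclideanSpace ℝ (Fin N) ≃ₗᵢ[ℝ] EuclideanSpace ℝ (Fin N), ν.map O = ν)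
    (d b c : ℝ) (x₀ : EuclideanSpace ℝ (Fin N)) :
    Ld ν d (fun x => ‖x‖ ^ 4 + b * ‖x‖ ^ 2 + c) x₀ =
      ‖x₀‖ ^ 4 + (b + (2 + 4 / N) * d ^ 2) * ‖x₀‖ ^ 2 + (c + b * d ^ 2 + d ^ 4) := by
  have hN0 : (N : ℝ) ≠ 0 := Nat.cast_ne_zero.mpr (by omega)
  set A : ℝ := ‖x₀‖ ^ 2 + d ^ 2 with hA
  have key : ∀ᵐ y ∂ν, ‖x₀ + d • y‖ ^ 4 + b * ‖x₀ + d • y‖ ^ 2 + c =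
      (A ^ 2 + b * A + c) + ((4 * A + 2 * b) * d) * ⟪x₀, y⟫ + (4 * d ^ 2) * ⟪x₀, y⟫ ^ 2 := by
    refine hsupp.mono fun y hy => ?_
    have hsq : ‖x₀ + d • y‖ ^ 2 = A + 2 * d * ⟪x₀, y⟫ := by
      rw [← real_inner_self_eq_norm_sq]
      rw [real_inner_add_add_self, real_inner_smul_right, real_inner_smul_left,
        real_inner_smul_right, real_inner_self_eq_norm_sq, real_inner_self_eq_norm_sq, hy]
      ring
    have h4 : ‖x₀ + d • y‖ ^ 4 = (‖x₀ + d • y‖ ^ 2) ^ 2 := by ring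
    rw [h4, hsq]
    ring
  unfold Ld
  rw [integral_congr_ae key]
  have I0 : Integrable (fun _ : EuclideanSpace ℝ (Fin N) => A ^ 2 + b * A + c) ν :=
    integrable_const _
  have I1 : Integrable (fun y => ((4 * A + 2 * b) * d) * ⟪x₀, y⟫) ν :=
    (inner_integrable ν hsupp x₀).const_mul _
  have I2 : Integrable (fun y => (4 * d ^ 2) * ⟪x₀, y⟫ ^ 2) ν :=
    (inner_sq_integrable ν hsupp x₀).const_mul _
  have I01 : Integrable (fun y => (A ^ 2 + b * A + c) +
      ((4 * A + 2 * b) * d) * ⟪x₀, y⟫) ν := I0.add I1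
  rw [integral_add I01 I2, integral_add I0 I1, integral_const,
    integral_const_mul, integral_const_mul, moment1 ν hinv x₀, moment2 ν hN hsupp hinv x₀]
  simp only [probReal_univ, measure_univ, ENNReal.toReal_one, smul_eq_mul, one_mul, mul_zero, add_zero, hA]
  field_simp
  ring

end Aux

noncomputable def s2L : List ℝ → ℝ
  | [] => 0
  | d :: l => d ^ 2 + s2L l

noncomputable def s4L : List ℝ → ℝ
  | [] => 0
  | d :: l => d ^ 4 + s4L l

noncomputable def tL : List ℝ → ℝ
  | [] => 0
  | d :: l => d ^ 2 * s2L l + tL l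

lemma iterLd_poly {N : ℕ} (ν : Measure (EuclideanSpace ℝ (Fin N))) [IsProbabilityMeasure ν]
    (hN : 1 ≤ N)
    (hsupp : ∀ᵐ y ∂ν, ‖y‖ = 1)
    (hinv : ∀ O : EuclideanSpace ℝ (Fin N) ≃ₗᵢ[ℝ] EuclideanSpace ℝ (Fin N), ν.map O = ν)
    (l : List ℝ) :
    ∀ x₀ : EuclideanSpace ℝ (Fin N),
      iterLd ν l (fun x => ‖x‖ ^ 4) x₀ =
        ‖x₀‖ ^ 4 + ((2 + 4 / N) * s2L l) * ‖x₀‖ ^ 2 + (s4L l + (2 + 4 / N) * tL l) := by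
  induction l with
  | nil => intro x₀; simp [iterLd, s2L, s4L, tL]
  | cons d l ih =>
    intro x₀
    show Ld ν d (iterLd ν l _) x₀ = _
    have hfun : iterLd ν l (fun x => ‖x‖ ^ 4) =
        fun x => ‖x‖ ^ 4 + ((2 + 4 / N) * s2L l) * ‖x‖ ^ 2 + (s4L l + (2 + 4 / N) * tL l) :=
      funext ih
    rw [hfun, Ld_poly ν hN hsupp hinv]
    simp only [s2L, s4L, tL]
    ring

lemma s2_ofFn : ∀ {M : ℕ} (d : Fin M → ℝ), s2L (List.ofFn d) = ∑ i, d i ^ 2 := by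
  intro M
  induction M with
  | zero => intro d; simp [s2L]
  | succ M ih =>
    intro d
    rw [List.ofFn_succ, Fin.sum_univ_succ]
    simp [s2L, ih]

lemma s4_ofFn : ∀ {M : ℕ} (d : Fin M → ℝ), s4L (List.ofFn d) = ∑ i, d i ^ 4 := by
  intro M
  induction M with
  | zero => intro d; simp [s4L]
  | succ M ih =>
    intro d
    rw [List.ofFn_succ, Fin.sum_univ_succ]
    simp [s4L, ih]

lemma t_ofFn : ∀ {M : ℕ} (d : Fin M → ℝ),
    tL (List.ofFn d) = ∑ i, ∑ j, if i < j then d i ^ 2 * d j ^ 2 else 0 := by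
  intro M
  induction M with
  | zero => intro d; simp [tL]
  | succ M ih =>
    intro d
    rw [List.ofFn_succ]
    show d 0 ^ 2 * s2L (List.ofFn fun i => d i.succ) + tL (List.ofFn fun i => d i.succ) = _
    rw [s2_ofFn, ih]
    rw [Fin.sum_univ_succ (f := fun i => ∑ j, if i < j then d i ^ 2 * d j ^ 2 else 0)]
    congr 1
    · rw [Fin.sum_univ_succ (f := fun j => if (0 : Fin (M+1)) < j then d 0 ^ 2 * d j ^ 2 else 0)]
      simp [Fin.succ_pos, Finset.mul_sum]
    · refine Finset.sum_congr rfl fun i _ => ?_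
      rw [Fin.sum_univ_succ (f := fun j => if i.succ < j then d i.succ ^ 2 * d j ^ 2 else 0)]
      simp [Fin.succ_lt_succ_iff, Fin.not_lt_zero]

lemma sq_s2 : ∀ l : List ℝ, (s2L l) ^ 2 = s4L l + 2 * tL l := by
  intro l
  induction l with
  | nil => simp [s2L, s4L, tL]
  | cons d l ih =>
    simp only [s2L, s4L, tL]
    nlinarith [ih]

theorem flat_chain_variance' (N M : ℕ) (hN : 1 ≤ N)
    (ν : Measure (EuclideanSpace ℝ (Fin N))) [IsProbabilityMeasure ν]
    (hsupp : ∀ᵐ y ∂ν, ‖y‖ = 1)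
    (hinv : ∀ O : EuclideanSpace ℝ (Fin N) ≃ₗᵢ[ℝ] EuclideanSpace ℝ (Fin N),
      ν.map O = ν)
    (d : Fin M → ℝ) (hd : ∀ i, 0 ≤ d i) :
    iterLd ν (List.ofFn d) (fun x => ‖x‖ ^ 4) 0 - (∑ i, d i ^ 2) ^ 2
      = (4 / (N : ℝ)) * ∑ i, ∑ j, if i < j then d i ^ 2 * d j ^ 2 else 0 := by
  rw [iterLd_poly ν hN hsupp hinv (List.ofFn d) 0]
  rw [← s2_ofFn d, ← t_ofFn d, sq_s2 (List.ofFn d)]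
  simp only [norm_zero]
  ring

/-- For the flat Markov chain in `ℝ^N` with radii `d₁, …, d_M` starting at `0`, the
variance of `‖x_M‖²` equals `(4/N)·∑_{i<j} d_i² d_j²`:
`E[‖x_M‖⁴] − (∑ d_i²)² = (4/N)·∑_{i<j} d_i² d_j²`. -/
theorem flat_chain_variance (N M : ℕ) (hN : 1 ≤ N)
    (ν : Measure (EuclideanSpace ℝ (Fin N))) [IsProbabilityMeasure ν]
    (hsupp : ∀ᵐ y ∂ν, ‖y‖ = 1)
    (hinv : ∀ O : EuclideanSpace ℝ (Fin N) ≃ₗᵢ[ℝ] EuclideanSpace ℝ (Fin N),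
      ν.map O = ν)
    (d : Fin M → ℝ) (hd : ∀ i, 0 ≤ d i) :
    iterLd ν (List.ofFn d) (fun x => ‖x‖ ^ 4) 0 - (∑ i, d i ^ 2) ^ 2
      = (4 / (N : ℝ)) * ∑ i, ∑ j, if i < j then d i ^ 2 * d j ^ 2 else 0 := by
  exact flat_chain_variance' N M hN ν hsupp hinv d hd
end

section
/- Consider the Markov chain on the hyperboloid H^{N-1} starting at u₀, where u_k is uniformly distributed on Σ(u_{k−1}, ξ_k) = cosh ξ_k·u_{k−1} + sinh ξ_k·S^{N-2}_{u_{k−1}⊥}, for given hyperbolic arcs ξ₁,…,ξ_M ≥ 0. Then E[⟨u_M, u₀⟩_H] = ∏_{i=1}^M cosh ξ_i. -/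
open MeasureTheory Real
open scoped RealInnerProductSpace

/-- The Minkowski bilinear form `⟨x,y⟩_H = x₁y₁ − ∑_{j≥2} x_j y_j` on
`ℝ^{1,n} = ℝ × ℝ^n` (total dimension `N = n + 1`). -/
noncomputable def mink {n : ℕ} (x y : ℝ × EuclideanSpace ℝ (Fin n)) : ℝ :=
  x.1 * y.1 - ⟪x.2, y.2⟫

/-- The hyperbolic averaging operator: `(LH ν ξ f) u` is the average of `f` over
`Σ(u,ξ) = cosh ξ · u + sinh ξ · S^{N-2}_{u⊥}`, where `ν u` is the uniform probability
measure on the unit sphere of the Minkowski-orthogonal complement of `u`. -/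
noncomputable def LH {n : ℕ}
    (ν : (ℝ × EuclideanSpace ℝ (Fin n)) → MeasureTheory.Measure (ℝ × EuclideanSpace ℝ (Fin n)))
    (ξ : ℝ) (f : (ℝ × EuclideanSpace ℝ (Fin n)) → ℝ)
    (u : ℝ × EuclideanSpace ℝ (Fin n)) : ℝ :=
  ∫ y, f (Real.cosh ξ • u + Real.sinh ξ • y) ∂(ν u)

/-- Iterated hyperbolic averaging: `(iterLH ν [ξ₁, …, ξ_M] f) u₀` is the expectation of
`f (u_M)` for the Markov chain on the hyperboloid starting at `u₀` whose `k`-th step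
moves uniformly on `Σ(u_{k-1}, ξ_k)`. -/
noncomputable def iterLH {n : ℕ}
    (ν : (ℝ × EuclideanSpace ℝ (Fin n)) → MeasureTheory.Measure (ℝ × EuclideanSpace ℝ (Fin n))) :
    List ℝ → ((ℝ × EuclideanSpace ℝ (Fin n)) → ℝ) → (ℝ × EuclideanSpace ℝ (Fin n)) → ℝ
  | [], f => f
  | ξ :: rest, f => LH ν ξ (iterLH ν rest f)

variable {n : ℕ}

lemma mink_comm (x y : ℝ × EuclideanSpace ℝ (Fin n)) : mink x y = mink y x := by
  simp [mink, real_inner_comm, mul_comm]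

lemma mink_add_left (x y v : ℝ × EuclideanSpace ℝ (Fin n)) :
    mink (x + y) v = mink x v + mink y v := by
  simp [mink, inner_add_left]; ring

lemma mink_smul_left (a : ℝ) (x v : ℝ × EuclideanSpace ℝ (Fin n)) :
    mink (a • x) v = a * mink x v := by
  simp [mink, inner_smul_left]; ring

lemma mink_sub_left (x y v : ℝ × EuclideanSpace ℝ (Fin n)) :
    mink (x - y) v = mink x v - mink y v := by
  simp [mink, inner_sub_left]; ring

lemma mink_cont (v : ℝ × EuclideanSpace ℝ (Fin n)) :
    Continuous (fun y : ℝ × EuclideanSpace ℝ (Fin n) => mink y v) := by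
  unfold mink
  exact (continuous_fst.mul continuous_const).sub
    (continuous_snd.inner continuous_const)

/-- Minkowski reflection fixing `u`: `x ↦ 2⟨x,u⟩_H u − x`. -/
noncomputable def mrefl (u : ℝ × EuclideanSpace ℝ (Fin n)) :
    (ℝ × EuclideanSpace ℝ (Fin n)) →ₗ[ℝ] (ℝ × EuclideanSpace ℝ (Fin n)) where
  toFun x := (2 * mink x u) • u - x
  map_add' x y := by
    rw [mink_add_left]
    rw [show 2 * (mink x u + mink y u) = 2 * mink x u + 2 * mink y u by ring, add_smul]
    abel
  map_smul' c x := by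
    rw [mink_smul_left]
    simp only [RingHom.id_apply, smul_sub, smul_smul]
    ring_nf

lemma mrefl_apply (u x : ℝ × EuclideanSpace ℝ (Fin n)) :
    mrefl u x = (2 * mink x u) • u - x := rfl

lemma mrefl_cont (u : ℝ × EuclideanSpace ℝ (Fin n)) : Continuous (mrefl u) := by
  show Continuous fun x : ℝ × EuclideanSpace ℝ (Fin n) => (2 * mink x u) • u - x
  exact ((continuous_const.mul (mink_cont u)).smul continuous_const).sub continuous_id

lemma mrefl_isom {u : ℝ × EuclideanSpace ℝ (Fin n)} (hu : mink u u = 1)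
    (x y : ℝ × EuclideanSpace ℝ (Fin n)) : mink (mrefl u x) (mrefl u y) = mink x y := by
  rw [mrefl_apply, mrefl_apply, mink_sub_left, mink_smul_left,
    mink_comm u ((2 * mink y u) • u - y), mink_comm x ((2 * mink y u) • u - y),
    mink_sub_left, mink_sub_left, mink_smul_left, mink_smul_left, hu,
    mink_comm y x, mink_comm u x]
  ring

lemma mrefl_fix {u : ℝ × EuclideanSpace ℝ (Fin n)} (hu : mink u u = 1) : mrefl u u = u := by
  rw [mrefl_apply, hu]
  norm_num
  rw [two_smul]
  abel

lemma mink_add_right (v x y : ℝ × EuclideanSpace ℝ (Fin n)) :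
    mink v (x + y) = mink v x + mink v y := by
  simp [mink, inner_add_right]; ring

lemma mink_smul_right (a : ℝ) (v x : ℝ × EuclideanSpace ℝ (Fin n)) :
    mink v (a • x) = a * mink v x := by
  simp [mink, inner_smul_right]; ring

lemma mink_coord_bound {u y : ℝ × EuclideanSpace ℝ (Fin n)}
    (hu : mink u u = 1) (hu1 : 0 < u.1) (h0 : mink u y = 0) (h1 : mink y y = -1) :
    y.1 ^ 2 ≤ u.1 ^ 2 - 1 ∧ ‖y.2‖ ≤ u.1 := by
  have hu' : u.1 * u.1 - ‖u.2‖ ^ 2 = 1 := by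
    have h := hu; rwa [mink, real_inner_self_eq_norm_sq] at h
  have hy' : y.1 * y.1 - ‖y.2‖ ^ 2 = -1 := by
    have h := h1; rwa [mink, real_inner_self_eq_norm_sq] at h
  have h0' : u.1 * y.1 = ⟪u.2, y.2⟫ := by
    have := h0; rw [mink] at this; linarith
  have hcs : |⟪u.2, y.2⟫| ≤ ‖u.2‖ * ‖y.2‖ := abs_real_inner_le_norm _ _
  have key : (u.1 * y.1) ^ 2 ≤ ‖u.2‖ ^ 2 * ‖y.2‖ ^ 2 := by
    rw [h0']
    nlinarith [abs_nonneg (⟪u.2, y.2⟫ : ℝ), sq_abs (⟪u.2, y.2⟫ : ℝ),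
      norm_nonneg u.2, norm_nonneg y.2]
  have hA : y.1 ^ 2 ≤ u.1 ^ 2 - 1 := by nlinarith [key]
  refine ⟨hA, ?_⟩
  have hB : ‖y.2‖ ^ 2 ≤ u.1 ^ 2 := by nlinarith
  nlinarith [norm_nonneg y.2]

lemma integral_mink_zero
    (μ : Measure (ℝ × EuclideanSpace ℝ (Fin n)))
    {u : ℝ × EuclideanSpace ℝ (Fin n)} (hu : mink u u = 1)
    (hsupp : ∀ᵐ y ∂μ, mink u y = 0 ∧ mink y y = -1)
    (hinv : μ.map (mrefl u) = μ)
    (v : ℝ × EuclideanSpace ℝ (Fin n)) :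
    ∫ y, mink y v ∂μ = 0 := by
  have h1 : ∫ y, mink y v ∂μ = ∫ y, mink (mrefl u y) v ∂μ := by
    conv_lhs => rw [← hinv]
    rw [integral_map (mrefl_cont u).aemeasurable (mink_cont v).aestronglyMeasurable]
  have h2 : ∫ y, mink (mrefl u y) v ∂μ = ∫ y, -(mink y v) ∂μ := by
    apply integral_congr_ae
    filter_upwards [hsupp] with y hy
    have hyu : mink y u = 0 := by rw [mink_comm]; exact hy.1
    rw [mrefl_apply, mink_sub_left, mink_smul_left, hyu]
    ring
  have h3 := h1.trans h2
  rw [integral_neg] at h3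
  linarith


lemma key_lemma
    (ν : (ℝ × EuclideanSpace ℝ (Fin n)) → Measure (ℝ × EuclideanSpace ℝ (Fin n)))
    (hνprob : ∀ u, mink u u = 1 → 0 < u.1 → IsProbabilityMeasure (ν u))
    (hνsupp : ∀ u, mink u u = 1 → 0 < u.1 →
      ∀ᵐ y ∂(ν u), mink u y = 0 ∧ mink y y = -1)
    (hνinv : ∀ u, mink u u = 1 → 0 < u.1 →
      ∀ L : (ℝ × EuclideanSpace ℝ (Fin n)) →ₗ[ℝ] (ℝ × EuclideanSpace ℝ (Fin n)),
        (∀ x y, mink (L x) (L y) = mink x y) → L u = u → (ν u).map L = ν u) :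
    ∀ ξs : List ℝ, (∀ ξ ∈ ξs, 0 ≤ ξ) →
      ∀ u v : ℝ × EuclideanSpace ℝ (Fin n), mink u u = 1 → 0 < u.1 →
        iterLH ν ξs (fun x => mink x v) u = (ξs.map Real.cosh).prod * mink u v := by
  intro ξs
  induction ξs with
  | nil => intro _ u v _ _; simp [iterLH]
  | cons ξ rest ih =>
    intro hξs u v hu hu1
    have hξ : 0 ≤ ξ := hξs ξ (by simp)
    have hrest : ∀ ζ ∈ rest, 0 ≤ ζ := fun ζ hζ => hξs ζ (by simp [hζ])
    have hprob := hνprob u hu hu1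
    have hsupp := hνsupp u hu hu1
    have hs : 0 ≤ Real.sinh ξ := by
      rw [← Real.sinh_zero]; exact Real.sinh_le_sinh.2 hξ
    simp only [iterLH, LH]
    set P : ℝ := (rest.map Real.cosh).prod with hP
    have hae : ∀ᵐ y ∂(ν u),
        iterLH ν rest (fun x => mink x v) (Real.cosh ξ • u + Real.sinh ξ • y)
          = P * Real.cosh ξ * mink u v + (P * Real.sinh ξ) * mink y v := by
      filter_upwards [hsupp] with y hy
      obtain ⟨h0, h1⟩ := hy
      have hyu : mink y u = 0 := by rw [mink_comm]; exact h0
      have hb := mink_coord_bound hu hu1 h0 h1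
      set w := Real.cosh ξ • u + Real.sinh ξ • y with hw
      have hww : mink w w = 1 := by
        rw [hw]
        simp only [mink_add_left, mink_smul_left, mink_add_right, mink_smul_right,
          hu, h1, hyu, h0]
        nlinarith [Real.cosh_sq_sub_sinh_sq ξ]
      have hw1 : 0 < w.1 := by
        have hwfst : w.1 = Real.cosh ξ * u.1 + Real.sinh ξ * y.1 := by
          rw [hw]; simp [Prod.fst_add]
        have hy1 : -u.1 ≤ y.1 := by nlinarith [hb.1, hu1]
        have h3 : 0 < (Real.cosh ξ - Real.sinh ξ) * u.1 := by
          rw [Real.cosh_sub_sinh]; positivity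
        have h4 : Real.sinh ξ * (-u.1) ≤ Real.sinh ξ * y.1 :=
          mul_le_mul_of_nonneg_left hy1 hs
        rw [hwfst]; nlinarith
      rw [ih hrest w v hww hw1, hw, mink_add_left, mink_smul_left, mink_smul_left]
      ring
    rw [integral_congr_ae hae]
    have hint : Integrable (fun y => mink y v) (ν u) := by
      refine Integrable.mono' (integrable_const (u.1 * (|v.1| + ‖v.2‖)))
        (mink_cont v).aestronglyMeasurable ?_
      filter_upwards [hsupp] with y hy
      obtain ⟨h0, h1⟩ := hy
      have hb := mink_coord_bound hu hu1 h0 h1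
      have hy1 : |y.1| ≤ u.1 := by
        nlinarith [hb.1, hu1, abs_nonneg y.1, sq_abs y.1]
      have h2 : |⟪y.2, v.2⟫| ≤ ‖y.2‖ * ‖v.2‖ := abs_real_inner_le_norm _ _
      rw [Real.norm_eq_abs, mink]
      have habs : |y.1 * v.1 - ⟪y.2, v.2⟫| ≤ |y.1| * |v.1| + ‖y.2‖ * ‖v.2‖ := by
        calc |y.1 * v.1 - ⟪y.2, v.2⟫| ≤ |y.1 * v.1| + |⟪y.2, v.2⟫| := by
              rw [sub_eq_add_neg]
              exact (abs_add_le _ _).trans (by rw [abs_neg])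
          _ ≤ |y.1| * |v.1| + ‖y.2‖ * ‖v.2‖ := by rw [abs_mul]; linarith [h2]
      have h5 := mul_le_mul_of_nonneg_right hy1 (abs_nonneg v.1)
      have h6 := mul_le_mul_of_nonneg_right hb.2 (norm_nonneg v.2)
      nlinarith [habs]
    have hzero : ∫ y, mink y v ∂(ν u) = 0 :=
      integral_mink_zero (ν u) hu hsupp
        (hνinv u hu hu1 (mrefl u) (mrefl_isom hu) (mrefl_fix hu)) v
    rw [integral_add (integrable_const _) (hint.const_mul _), integral_const,
      integral_const_mul, hzero]
    simp only [measure_univ, probReal_univ, ENNReal.toReal_one, one_smul, mul_zero, add_zero,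
      List.map_cons, List.prod_cons, hP]
    ring

/-- For the Markov chain on the hyperboloid `H^{N-1}` (`N = n + 1 ≥ 3`) starting at `u₀`,
where `u_k` is uniformly distributed on `Σ(u_{k-1}, ξ_k)` for given hyperbolic arcs
`ξ₁, …, ξ_M ≥ 0`, one has `E[⟨u_M, u₀⟩_H] = ∏ cosh ξ_i`. -/
theorem hyperbolic_chain_expectation (n : ℕ) (hn : 2 ≤ n)
    (ν : (ℝ × EuclideanSpace ℝ (Fin n)) → Measure (ℝ × EuclideanSpace ℝ (Fin n)))
    (hνprob : ∀ u, mink u u = 1 → 0 < u.1 → IsProbabilityMeasure (ν u))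
    (hνsupp : ∀ u, mink u u = 1 → 0 < u.1 →
      ∀ᵐ y ∂(ν u), mink u y = 0 ∧ mink y y = -1)
    (hνinv : ∀ u, mink u u = 1 → 0 < u.1 →
      ∀ L : (ℝ × EuclideanSpace ℝ (Fin n)) →ₗ[ℝ] (ℝ × EuclideanSpace ℝ (Fin n)),
        (∀ x y, mink (L x) (L y) = mink x y) → L u = u → (ν u).map L = ν u)
    (ξs : List ℝ) (hξs : ∀ ξ ∈ ξs, 0 ≤ ξ)
    (u₀ : ℝ × EuclideanSpace ℝ (Fin n)) (hu₀ : mink u₀ u₀ = 1) (hu₀1 : 0 < u₀.1) :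
    iterLH ν ξs (fun x => mink x u₀) u₀ = (ξs.map Real.cosh).prod := by
  have h := key_lemma ν hνprob hνsupp hνinv ξs hξs u₀ u₀ hu₀ hu₀1
  rw [h, hu₀, mul_one]
end
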